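/- Assume [k : k^p] < ∞ and that √τ = m. Then for all sufficiently large q = p^e: every homogeneous g ∈ S with Jg ⊆ m^{[q]}, g ∉ m^{[q]}, and f^{p−1}g^p ∈ m^{[pq]} satisfies deg(g) − (n+1)q ≥ −reg(S/τ) − (n+1). (Via the Čech-complex identification of H^{n+1−c}_m(S/J) inside H^{n+1}_m(S)[−d], this says the Frobenius action on H^{n+1−c}_m(S/J) is injective in all degrees < a(S/J) − reg(S/τ), where a(S/J) = d − (n+1).) -/

import Mathlib

/-!
STATEMENT 8: Assume `[k : k^p] < ∞` and `√τ = m`, where `τ` is the smallest ideal with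
`J = (f_1, …, f_c) ⊆ τ` and `f^{p−1} ∈ τ^{[p]}` (`f = f_1⋯f_c` a product of a
homogeneous regular sequence). Then for all sufficiently large `q = p^e`: every
homogeneous `g ∈ S` with `Jg ⊆ m^{[q]}`, `g ∉ m^{[q]}` and `f^{p−1}g^p ∈ m^{[pq]}`
satisfies `deg(g) − (n+1)q ≥ −reg(S/τ) − (n+1)`.  (Frobenius on `H^{n+1−c}_m(S/J)` is
injective in degrees `< a(S/J) − reg(S/τ)`.)
-/

noncomputable section

open MvPolynomial
open scoped Classical

/-- The homogeneous maximal ideal `m = (x_0, …, x_n)` of `k[x_0, …, x_n]`. -/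
def maxIdeal (k : Type) [Field k] (n : ℕ) : Ideal (MvPolynomial (Fin (n + 1)) k) :=
  Ideal.span (Set.range MvPolynomial.X)

/-- The `q`-th bracket (Frobenius) power `I^{[q]}` of an ideal. -/
def brk {R : Type} [CommRing R] (I : Ideal R) (q : ℕ) : Ideal R :=
  Ideal.span ((fun a => a ^ q) '' (I : Set R))

/-- `reg(S/I)`: the largest integer `a` such that `m^a ⊄ I` (for `I` containing a power
of `m`). -/
def reg (k : Type) [Field k] (n : ℕ) (I : Ideal (MvPolynomial (Fin (n + 1)) k)) : ℕ :=
  sSup {a : ℕ | ¬ (maxIdeal k n) ^ a ≤ I}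

namespace Stmt8Aux

variable {k : Type} [Field k] {p : ℕ} [Fact p.Prime] [CharP k p] {σ : Type}

/-- The subfield of `p`-th powers. -/
abbrev Kp (k : Type) [Field k] (p : ℕ) [Fact p.Prime] [CharP k p] : Subfield k :=
  (frobenius k p).fieldRange

/-- Frobenius as an equivalence onto its range. -/
def efr (k : Type) [Field k] (p : ℕ) [Fact p.Prime] [CharP k p] : k ≃+* Kp k p :=
  RingEquiv.ofBijective ((frobenius k p).rangeRestrictField)
    ⟨fun a b h => frobenius_inj k p (congrArg Subtype.val h),
     fun ⟨y, hy⟩ => by obtain ⟨x, hx⟩ := RingHom.mem_fieldRange.mp hy; exact ⟨x, Subtype.ext hx⟩⟩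

lemma efr_symm_pow (a : Kp k p) : ((efr k p).symm a) ^ p = (a : k) := by
  have : (frobenius k p) ((efr k p).symm a) = a :=
    congrArg Subtype.val ((efr k p).apply_symm_apply a)
  simpa [frobenius_def] using this

/-- basis of `k` over `k^p` -/
def tB (k : Type) [Field k] (p : ℕ) [Fact p.Prime] [CharP k p] :
    Module.Basis (Module.Basis.ofVectorSpaceIndex (Kp k p) k) (Kp k p) k :=
  Module.Basis.ofVectorSpace (Kp k p) k

variable (k p σ) in
/-- index type for the Frobenius basis of the polynomial ring -/
abbrev Idx : Type := (Module.Basis.ofVectorSpaceIndex (Kp k p) k) × (σ →₀ ℕ)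

/-- componentwise div by p -/
def dv (p : ℕ) (α : σ →₀ ℕ) : σ →₀ ℕ := α.mapRange (· / p) (Nat.zero_div p)
/-- componentwise mod p -/
def md (p : ℕ) (α : σ →₀ ℕ) : σ →₀ ℕ := α.mapRange (· % p) (Nat.zero_mod p)

variable (k p) in
def emb (α : σ →₀ ℕ) :
    (Module.Basis.ofVectorSpaceIndex (Kp k p) k) ↪ Idx k p σ :=
  ⟨fun s => (s, md p α), fun a b h => (Prod.ext_iff.mp h).1⟩

/-- the per-monomial piece of the decomposition -/
def ψ (α : σ →₀ ℕ) : k →+ (Idx k p σ →₀ MvPolynomial σ k) :=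
  { toFun := fun c => Finsupp.embDomain (emb k p α)
      (Finsupp.mapRange.addMonoidHom
        (((monomial (dv p α) : k →ₗ[k] MvPolynomial σ k).toAddMonoidHom).comp
          ((efr k p).symm.toRingHom.toAddMonoidHom)) ((tB k p).repr c))
    map_zero' := by simp
    map_add' := fun a b => by
      show Finsupp.embDomain _ _ = Finsupp.embDomain _ _ + Finsupp.embDomain _ _
      rw [map_add, map_add, Finsupp.embDomain_add] }

def Ψ : MvPolynomial σ k →+ (Idx k p σ →₀ MvPolynomial σ k) :=
  (Finsupp.liftAddHom (ψ (k := k) (p := p) (σ := σ))).comp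
    AddMonoidAlgebra.coeffAddEquiv.toAddMonoidHom

def π (i : Idx k p σ) : MvPolynomial σ k →+ MvPolynomial σ k :=
  { toFun := fun r => Ψ r i
    map_zero' := by simp [Ψ]
    map_add' := fun a b => by simp only [map_add, Finsupp.add_apply] }

def bB (i : Idx k p σ) : MvPolynomial σ k := C (((tB k p) i.1 : k)) * monomial i.2 (1 : k)

lemma Ψ_monomial (α : σ →₀ ℕ) (c : k) :
    Ψ (monomial α c : MvPolynomial σ k) = ψ (p := p) α c := by
  rw [Ψ, AddMonoidHom.comp_apply]
  exact Finsupp.liftAddHom_apply_single _ _ _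

lemma π_monomial (s : Module.Basis.ofVectorSpaceIndex (Kp k p) k) (β α : σ →₀ ℕ) (c : k) :
    π (σ := σ) (s, β) (monomial α c) =
      if β = md p α then monomial (dv p α) ((efr k p).symm ((tB k p).repr c s)) else 0 := by
  show Ψ (monomial α c : MvPolynomial σ k) (s, β) = _
  rw [Ψ_monomial]
  show (Finsupp.embDomain (emb k p α) _) (s, β) = _
  by_cases h : β = md p α
  · subst h
    rw [show ((s, md p α) : Idx k p σ) = emb k p α s from rfl, Finsupp.embDomain_apply]
    simp
  · rw [Finsupp.embDomain_notin_range, if_neg h]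
    rintro ⟨s', hs'⟩
    exact h (congrArg Prod.snd hs').symm


lemma md_smul_add (δ α : σ →₀ ℕ) : md p (p • δ + α) = md p α := by
  have hp : 0 < p := (Fact.out : p.Prime).pos
  ext x
  simp [md, Finsupp.mapRange_apply, Nat.mul_add_mod]

lemma dv_smul_add (δ α : σ →₀ ℕ) : dv p (p • δ + α) = δ + dv p α := by
  have hp : 0 < p := (Fact.out : p.Prime).pos
  ext x
  simp [dv, Finsupp.mapRange_apply, Nat.mul_add_div hp]

lemma coe_efr (a : k) : (efr k p a : k) = a ^ p := by
  simp [efr, frobenius_def]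
  rfl

lemma π_monomial_pow_mul (i : Idx k p σ) (δ : σ →₀ ℕ) (a : k) (α : σ →₀ ℕ) (c : k) :
    π i ((monomial δ a) ^ p * monomial α c) = monomial δ a * π i (monomial α c) := by
  obtain ⟨s, β⟩ := i
  have hrepr : (tB k p).repr (a ^ p * c) s = (efr k p a) * (tB k p).repr c s := by
    have h1 : a ^ p * c = (efr k p a) • c := by
      rw [show ((efr k p a) • c) = (efr k p a : k) * c from rfl, coe_efr]
    rw [h1, map_smul, Finsupp.smul_apply, smul_eq_mul]
  rw [monomial_pow, monomial_mul, π_monomial, π_monomial, md_smul_add, dv_smul_add, hrepr]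
  by_cases h : β = md p α
  · rw [if_pos h, if_pos h, monomial_mul, map_mul, RingEquiv.symm_apply_apply]
  · rw [if_neg h, if_neg h, mul_zero]

lemma π_semilinear (i : Idx k p σ) (s r : MvPolynomial σ k) :
    π i (s ^ p * r) = s * π i r := by
  induction r using MvPolynomial.induction_on' with
  | monomial α c =>
    induction s using MvPolynomial.induction_on' with
    | monomial δ a => exact π_monomial_pow_mul i δ a α c
    | add s₁ s₂ ih₁ ih₂ => rw [add_pow_char, add_mul, add_mul, map_add, ih₁, ih₂]
  | add r₁ r₂ ih₁ ih₂ => rw [mul_add, map_add, ih₁, ih₂, map_add, mul_add]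

def Φ : (Idx k p σ →₀ MvPolynomial σ k) →+ MvPolynomial σ k :=
  Finsupp.liftAddHom fun i =>
    AddMonoidHom.mk' (fun a => a ^ p * bB i) (fun a b => by
      show (a + b) ^ p * bB i = a ^ p * bB i + b ^ p * bB i
      rw [add_pow_char, add_mul])

lemma smul_dv_add_md (α : σ →₀ ℕ) : p • dv p α + md p α = α := by
  ext x
  simp [dv, md, Finsupp.mapRange_apply, Nat.div_add_mod]

lemma Φ_Ψ (r : MvPolynomial σ k) : Φ (p := p) (Ψ (p := p) r) = r := by
  have hp : p ≠ 0 := (Fact.out : p.Prime).ne_zero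
  induction r using MvPolynomial.induction_on' with
  | add r₁ r₂ ih₁ ih₂ => rw [map_add, map_add, ih₁, ih₂]
  | monomial α c =>
    rw [Ψ_monomial]
    show Φ (Finsupp.embDomain (emb k p α) _) = _
    rw [Φ, Finsupp.liftAddHom_apply]
    rw [Finsupp.sum_embDomain]
    rw [show (Finsupp.mapRange.addMonoidHom
        (((monomial (dv p α) : k →ₗ[k] MvPolynomial σ k).toAddMonoidHom).comp
          ((efr k p).symm.toRingHom.toAddMonoidHom)) ((tB k p).repr c)) =
        Finsupp.mapRange _ (by simp) ((tB k p).repr c) from rfl]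
    rw [Finsupp.sum_mapRange_index (by intro s; simp [zero_pow hp])]
    show ((tB k p).repr c).sum (fun s a =>
        (monomial (dv p α) ((efr k p).symm a) : MvPolynomial σ k) ^ p * bB (s, md p α))
      = monomial α c
    have hterm : ∀ (s : Module.Basis.ofVectorSpaceIndex (Kp k p) k) (a : Kp k p),
        (monomial (dv p α) ((efr k p).symm a) : MvPolynomial σ k) ^ p * bB (s, md p α)
          = monomial α ((a : k) * ((tB k p) s)) := by
      intro s a
      rw [monomial_pow, efr_symm_pow]
      show _ * (C (((tB k p) s : k)) * monomial (md p α) (1 : k)) = _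
      rw [C_mul_monomial, mul_one, monomial_mul, smul_dv_add_md]
    have hcg : ((tB k p).repr c).sum (fun s a =>
        (monomial (dv p α) ((efr k p).symm a) : MvPolynomial σ k) ^ p * bB (s, md p α))
        = ((tB k p).repr c).sum (fun s a => monomial α ((a : k) * ((tB k p) s))) :=
      Finsupp.sum_congr (fun s _ => hterm s _)
    rw [hcg]
    have hc : ((tB k p).repr c).sum (fun s a => (a : k) * ((tB k p) s)) = c := by
      have h2 := (tB k p).linearCombination_repr c
      rw [Finsupp.linearCombination_apply] at h2
      exact h2
    calc ((tB k p).repr c).sum (fun s a => monomial α ((a : k) * ((tB k p) s)))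
        = monomial α (((tB k p).repr c).sum (fun s a => (a : k) * ((tB k p) s))) :=
          (map_finsuppSum (monomial α : k →ₗ[k] MvPolynomial σ k) _ _).symm
      _ = monomial α c := by rw [hc]

lemma decomp (r : MvPolynomial σ k) :
    ∃ T : Finset (Idx k p σ), r = ∑ i ∈ T, (π i r) ^ p * bB i := by
  refine ⟨(Ψ (p := p) r).support, ?_⟩
  conv_lhs => rw [← Φ_Ψ (p := p) r]
  rw [Φ, Finsupp.liftAddHom_apply]
  rfl

lemma frob_colon (I : Ideal (MvPolynomial σ k)) (g h : MvPolynomial σ k)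
    (hm : h * g ^ p ∈ Ideal.span ((fun a => a ^ p) '' (I : Set (MvPolynomial σ k)))) :
    h ∈ Ideal.span
      ((fun a => a ^ p) '' ((I.colon (Ideal.span {g})) : Set (MvPolynomial σ k))) := by
  have hπI : ∀ x, x ∈ Ideal.span ((fun a => a ^ p) '' (I : Set (MvPolynomial σ k))) →
      ∀ i : Idx k p σ, π i x ∈ I := by
    intro x hx i
    obtain ⟨m, cf, vs, hsum⟩ := Submodule.mem_span_set'.mp hx
    choose a ha hae using fun j => (vs j).2
    rw [← hsum, map_sum]
    apply Ideal.sum_mem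
    intro j _
    have hj : cf j • (vs j : MvPolynomial σ k) = (a j) ^ p * cf j := by
      rw [smul_eq_mul, ← hae j, mul_comm]
    rw [hj, π_semilinear]
    exact I.mul_mem_right _ (ha j)
  have hcolon : ∀ i : Idx k p σ, π i h ∈ I.colon (Ideal.span {g}) := by
    intro i
    rw [Ideal.mem_colon_span_singleton, mul_comm]
    have hgh : g * π i h = π i (h * g ^ p) := by rw [mul_comm h, π_semilinear]
    rw [hgh]
    exact hπI _ hm i
  obtain ⟨T, hT⟩ := decomp (p := p) h
  rw [hT]
  apply Ideal.sum_mem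
  intro i _
  exact Ideal.mul_mem_right _ _ (Ideal.subset_span ⟨π i h, hcolon i, rfl⟩)

end Stmt8Aux


namespace Stmt8Aux

variable {k : Type} [Field k] {p : ℕ} [Fact p.Prime] [CharP k p] {σ : Type}

lemma brk_span (T : Set (MvPolynomial σ k)) (e : ℕ) :
    brk (Ideal.span T) (p ^ e) = Ideal.span ((fun a => a ^ p ^ e) '' T) := by
  have hpe : (p : ℕ) ^ e ≠ 0 := pow_ne_zero _ (Fact.out : p.Prime).ne_zero
  have key : ∀ x ∈ Ideal.span T, x ^ p ^ e ∈ Ideal.span ((fun a => a ^ p ^ e) '' T) := by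
    intro x hx
    induction hx using Submodule.span_induction with
    | mem y hy => exact Ideal.subset_span ⟨y, hy, rfl⟩
    | zero =>
      have : (0 : MvPolynomial σ k) ^ p ^ e = 0 := zero_pow hpe
      rw [this]; exact zero_mem _
    | add y z _ _ ihy ihz =>
      have : (y + z) ^ p ^ e = y ^ p ^ e + z ^ p ^ e := add_pow_char_pow y z p e
      rw [this]; exact add_mem ihy ihz
    | smul r y _ ihy =>
      have : (r • y) ^ p ^ e = r ^ p ^ e * y ^ p ^ e := by rw [smul_eq_mul, mul_pow]
      rw [this]; exact Ideal.mul_mem_left _ _ ihy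
  apply le_antisymm
  · rw [brk]
    apply Ideal.span_le.mpr
    rintro _ ⟨x, hx, rfl⟩
    exact key x hx
  · apply Ideal.span_le.mpr
    rintro _ ⟨x, hx, rfl⟩
    exact Ideal.subset_span ⟨x, Ideal.subset_span hx, rfl⟩

variable {n : ℕ}

lemma brk_maxIdeal (e : ℕ) :
    brk (maxIdeal k n) (p ^ e)
      = Ideal.span (Set.range fun i => (X i : MvPolynomial (Fin (n + 1)) k) ^ p ^ e) := by
  rw [maxIdeal, brk_span, ← Set.range_comp]
  rfl

lemma brk_brk (e : ℕ) :
    Ideal.span ((fun a => a ^ p) ''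
        ((brk (maxIdeal k n) (p ^ e) : Ideal (MvPolynomial (Fin (n + 1)) k)) :
          Set (MvPolynomial (Fin (n + 1)) k)))
      = brk (maxIdeal k n) (p ^ (e + 1)) := by
  have h1 : Ideal.span ((fun a => a ^ p) ''
      ((brk (maxIdeal k n) (p ^ e) : Ideal (MvPolynomial (Fin (n + 1)) k)) :
        Set (MvPolynomial (Fin (n + 1)) k)))
      = brk (brk (maxIdeal k n) (p ^ e)) (p ^ 1) := by rw [pow_one]; rfl
  rw [h1, brk_maxIdeal, brk_span, ← Set.range_comp, brk_maxIdeal]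
  refine congrArg Ideal.span (congrArg Set.range (funext fun i => ?_))
  show ((X i : MvPolynomial (Fin (n + 1)) k) ^ p ^ e) ^ p ^ 1 = (X i) ^ p ^ (e + 1)
  rw [← pow_mul, pow_one, ← pow_succ]

lemma mem_Mq_iff (q : ℕ) (x : MvPolynomial (Fin (n + 1)) k) :
    x ∈ Ideal.span (Set.range fun i => (X i : MvPolynomial (Fin (n + 1)) k) ^ q)
      ↔ ∀ α ∈ x.support, ∃ i, q ≤ α i := by
  have himg : (Set.range fun i : Fin (n + 1) => (X i : MvPolynomial (Fin (n + 1)) k) ^ q)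
      = (fun s => monomial s (1 : k)) '' (Set.range fun i : Fin (n + 1) => Finsupp.single i q) := by
    rw [← Set.range_comp]
    exact congrArg Set.range (funext fun i => X_pow_eq_monomial)
  rw [himg, mem_ideal_span_monomial_image]
  constructor
  · intro h α hα
    obtain ⟨si, hsi, hle⟩ := h α hα
    obtain ⟨i, rfl⟩ := hsi
    exact ⟨i, by simpa using (Finsupp.single_le_iff.mp hle)⟩
  · intro h α hα
    obtain ⟨i, hi⟩ := h α hα
    exact ⟨Finsupp.single i q, ⟨i, rfl⟩, Finsupp.single_le_iff.mpr hi⟩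

lemma monomial_mem_pow (ν : Fin (n + 1) →₀ ℕ) :
    (monomial ν (1 : k)) ∈ (maxIdeal k n) ^ (∑ i, ν i) := by
  generalize h : (∑ i, ν i) = s
  induction s generalizing ν with
  | zero =>
    have hν : ν = 0 := by
      ext i
      have := Finset.sum_eq_zero_iff.mp h i (Finset.mem_univ i)
      simpa using this
    subst hν
    rw [pow_zero, Ideal.one_eq_top]
    exact Submodule.mem_top
  | succ s ih =>
    have hex : ∃ i, ν i ≠ 0 := by
      by_contra hall
      push_neg at hall
      rw [Finset.sum_eq_zero (fun i _ => hall i)] at h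
      omega
    obtain ⟨i, hi⟩ := hex
    set ν' := ν - Finsupp.single i 1 with hν'
    have happ : ∀ j, ν' j = ν j - (if j = i then 1 else 0) := by
      intro j
      rw [hν', Finsupp.tsub_apply, Finsupp.single_apply]
      simp [eq_comm]
    have hsplit : ν = Finsupp.single i 1 + ν' := by
      ext j
      rw [Finsupp.add_apply, Finsupp.single_apply, happ j]
      rcases eq_or_ne j i with h' | h'
      · subst h'; simp; omega
      · simp [h', Ne.symm h']
    have hsum' : (∑ j, ν' j) = s := by
      have : ∀ j, ν' j + (if j = i then 1 else 0) = ν j := by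
        intro j
        rw [happ j]
        rcases eq_or_ne j i with h' | h'
        · subst h'; simp; omega
        · simp [h']
      have h2 : (∑ j, ν' j) + (∑ j : Fin (n + 1), if j = i then 1 else 0) = ∑ j, ν j := by
        rw [← Finset.sum_add_distrib]
        exact Finset.sum_congr rfl (fun j _ => this j)
      rw [Finset.sum_ite_eq' Finset.univ i (fun _ => 1), if_pos (Finset.mem_univ i)] at h2
      omega
    have hmono : (monomial ν (1 : k) : MvPolynomial (Fin (n + 1)) k)
        = X i * monomial ν' 1 := by
      rw [X, monomial_mul, one_mul, ← hsplit]
    rw [hmono, pow_succ']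
    exact Ideal.mul_mem_mul (Ideal.subset_span ⟨i, rfl⟩) (ih ν' hsum')

lemma exists_nu (μ : Fin (n + 1) →₀ ℕ) (s : ℕ) (hs : s ≤ ∑ i, μ i) :
    ∃ ν : Fin (n + 1) →₀ ℕ, (∀ i, ν i ≤ μ i) ∧ (∑ i, ν i) = s := by
  induction s with
  | zero => exact ⟨0, fun i => Nat.zero_le _, by simp⟩
  | succ s ih =>
    obtain ⟨ν, hle, hsum⟩ := ih (le_trans (Nat.le_succ s) hs)
    have hex : ∃ i, ν i < μ i := by
      by_contra hall
      push_neg at hall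
      have : ∑ i, ν i = ∑ i, μ i :=
        Finset.sum_congr rfl (fun i _ => le_antisymm (hle i) (hall i))
      omega
    obtain ⟨i, hi⟩ := hex
    have happ : ∀ j, ((ν + Finsupp.single i 1 : Fin (n + 1) →₀ ℕ)) j
        = ν j + (if i = j then 1 else 0) := by
      intro j
      rw [Finsupp.add_apply, Finsupp.single_apply]
    refine ⟨ν + Finsupp.single i 1, fun j => ?_, ?_⟩
    · rw [happ j]
      rcases eq_or_ne i j with h' | h'
      · rw [if_pos h', ← h']
        omega
      · rw [if_neg h']
        have := hle j
        omega
    · rw [Finset.sum_congr rfl (fun j _ => happ j), Finset.sum_add_distrib,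
        Finset.sum_ite_eq Finset.univ i (fun _ => 1), if_pos (Finset.mem_univ i), hsum]

lemma pow_reg_le (τ : Ideal (MvPolynomial (Fin (n + 1)) k))
    (hrad : τ.radical = maxIdeal k n) :
    (maxIdeal k n) ^ (reg k n τ + 1) ≤ τ := by
  have hfg : (maxIdeal k n).FG := Submodule.fg_span (Set.finite_range _)
  obtain ⟨N, hN⟩ := Ideal.exists_pow_le_of_le_radical_of_fg (le_of_eq hrad.symm) hfg
  have hbdd : BddAbove {a : ℕ | ¬ (maxIdeal k n) ^ a ≤ τ} := by
    refine ⟨N, fun a ha => ?_⟩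
    by_contra hcon
    push_neg at hcon
    exact ha (le_trans (Ideal.pow_le_pow_right (le_of_lt hcon)) hN)
  by_contra hc
  have : reg k n τ + 1 ≤ reg k n τ := le_csSup hbdd hc
  omega

end Stmt8Aux

open Stmt8Aux in
theorem stmt8 (k : Type) [Field k] (p : ℕ) [Fact p.Prime] [CharP k p]
    (hfin : (frobenius k p).Finite) (n c : ℕ)
    (f : Fin c → MvPolynomial (Fin (n + 1)) k) (df : Fin c → ℕ)
    (hhom : ∀ j, (f j).IsHomogeneous (df j))
    (hreg : RingTheory.Sequence.IsRegular (MvPolynomial (Fin (n + 1)) k) (List.ofFn f))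
    (J : Ideal (MvPolynomial (Fin (n + 1)) k)) (hJ : J = Ideal.span (Set.range f))
    (τ : Ideal (MvPolynomial (Fin (n + 1)) k))
    (hJτ : J ≤ τ) (hfτ : (∏ j, f j) ^ (p - 1) ∈ brk τ p)
    (hmin : ∀ a : Ideal (MvPolynomial (Fin (n + 1)) k),
      J ≤ a → (∏ j, f j) ^ (p - 1) ∈ brk a p → τ ≤ a)
    (hrad : τ.radical = maxIdeal k n) :
    ∃ e₀ : ℕ, ∀ e ≥ e₀, ∀ (g : MvPolynomial (Fin (n + 1)) k) (D : ℕ),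
      g.IsHomogeneous D →
      Ideal.span {g} * J ≤ brk (maxIdeal k n) (p ^ e) →
      g ∉ brk (maxIdeal k n) (p ^ e) →
      (∏ j, f j) ^ (p - 1) * g ^ p ∈ brk (maxIdeal k n) (p * p ^ e) →
      (D : ℤ) - ((n : ℤ) + 1) * (p : ℤ) ^ e ≥ -(reg k n τ : ℤ) - ((n : ℤ) + 1) := by
  refine ⟨0, fun e _ g D hg_hom hJg hg_notin hfg => ?_⟩
  set q : ℕ := p ^ e with hq
  have hq1 : 1 ≤ q := Nat.one_le_pow _ _ (Fact.out : p.Prime).pos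
  set r : ℕ := reg k n τ with hr
  by_contra hlt
  push_neg at hlt
  -- translate to ℕ
  have hqcast : ((q : ℕ) : ℤ) = (p : ℤ) ^ e := by push_cast [hq]; ring
  have hDr : D + r + 1 + n + 1 ≤ (n + 1) * q := by
    have h1 : (D : ℤ) + r + n + 2 ≤ ((n : ℤ) + 1) * (p : ℤ) ^ e := by linarith
    rw [← hqcast] at h1
    have := h1
    push_cast at this
    exact_mod_cast by nlinarith [this]
  -- the ideal Mq
  set Mq : Ideal (MvPolynomial (Fin (n + 1)) k) :=
    Ideal.span (Set.range fun i => (X i : MvPolynomial (Fin (n + 1)) k) ^ q) with hMq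
  have hbrkq : brk (maxIdeal k n) (p ^ e) = Mq := brk_maxIdeal e
  -- the colon ideal
  set a : Ideal (MvPolynomial (Fin (n + 1)) k) := Mq.colon (Ideal.span {g}) with ha
  have hJa : J ≤ a := by
    intro x hx
    rw [ha, Ideal.mem_colon_span_singleton]
    have : g * x ∈ Ideal.span {g} * J :=
      Ideal.mul_mem_mul (Ideal.mem_span_singleton_self g) hx
    have h2 := hJg this
    rw [hbrkq] at h2
    rwa [mul_comm] at h2
  have hfa : (∏ j, f j) ^ (p - 1) ∈ brk a p := by
    have hm : (∏ j, f j) ^ (p - 1) * g ^ p ∈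
        Ideal.span ((fun x => x ^ p) '' (Mq : Set (MvPolynomial (Fin (n + 1)) k))) := by
      have h1 : brk (maxIdeal k n) (p * p ^ e) = brk (maxIdeal k n) (p ^ (e + 1)) := by
        rw [pow_succ, mul_comm]
      have h2 := hfg
      rw [h1, ← brk_brk e, hbrkq] at h2
      exact h2
    exact frob_colon Mq g _ hm
  have hτa : τ ≤ a := hmin a hJa hfa
  -- the monomial of g with small exponents
  have hg_notin' : ¬ ∀ α ∈ g.support, ∃ i, q ≤ α i := by
    rw [← mem_Mq_iff q g, ← hMq, ← hbrkq]
    exact hg_notin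
  push_neg at hg_notin'
  obtain ⟨α, hαsupp, hαsm⟩ := hg_notin'
  have hαlt : ∀ i, α i ≤ q - 1 := by
    intro i
    have := hαsm i
    omega
  have hD : ∑ i, α i = D := by
    have h1 : (Finsupp.weight 1) α = D := hg_hom (mem_support_iff.mp hαsupp)
    rw [show (Finsupp.weight 1 : (Fin (n + 1) →₀ ℕ) →+ ℕ) = Finsupp.weight (fun _ => 1) from rfl,
      ← Finsupp.degree_eq_weight_one] at h1
    rw [← h1, Finsupp.degree]
    exact (Finset.sum_subset (Finset.subset_univ _)
      (fun i _ hi => Finsupp.notMem_support_iff.mp hi)).symm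
  -- construct ν
  set μ : Fin (n + 1) →₀ ℕ := Finsupp.equivFunOnFinite.symm (fun i => q - 1 - α i) with hμ
  have hμapp : ∀ i, μ i = q - 1 - α i := fun i => rfl
  have hμsum : (∑ i, μ i) + D = (n + 1) * (q - 1) := by
    have h1 : ∀ i : Fin (n + 1), μ i + α i = q - 1 := by
      intro i; rw [hμapp i]; have := hαlt i; omega
    calc (∑ i, μ i) + D = ∑ i : Fin (n + 1), (μ i + α i) := by
          rw [Finset.sum_add_distrib, hD]
      _ = ∑ _i : Fin (n + 1), (q - 1) := Finset.sum_congr rfl (fun i _ => h1 i)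
      _ = (n + 1) * (q - 1) := by
          rw [Finset.sum_const, Finset.card_univ, Fintype.card_fin, smul_eq_mul]
  have hq' : (n + 1) * q = (n + 1) * (q - 1) + (n + 1) := by
    calc (n + 1) * q = (n + 1) * ((q - 1) + 1) := by rw [Nat.sub_add_cancel hq1]
      _ = (n + 1) * (q - 1) + (n + 1) := by ring
  have hrμ : r + 1 ≤ ∑ i, μ i := by omega
  obtain ⟨ν, hνle, hνsum⟩ := exists_nu μ (r + 1) hrμ
  -- monomial ν 1 ∈ m^(r+1) ≤ τ ≤ a
  have hν_mem : (monomial ν (1 : k) : MvPolynomial (Fin (n + 1)) k) ∈ a := by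
    apply hτa
    apply pow_reg_le τ hrad
    have := monomial_mem_pow (k := k) ν
    rwa [hνsum] at this
  have hνg : (monomial ν (1 : k) : MvPolynomial (Fin (n + 1)) k) * g ∈ Mq := by
    rw [ha] at hν_mem
    exact Ideal.mem_colon_span_singleton.mp hν_mem
  -- contradiction via the coefficient at ν + α
  have hcoeff : coeff (ν + α) ((monomial ν (1 : k) : MvPolynomial (Fin (n + 1)) k) * g)
      = coeff α g := by
    rw [coeff_monomial_mul, one_mul]
  have hsupp2 : (ν + α) ∈ ((monomial ν (1 : k) : MvPolynomial (Fin (n + 1)) k) * g).support := by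
    rw [mem_support_iff, hcoeff]
    exact mem_support_iff.mp hαsupp
  obtain ⟨i, hi⟩ := (mem_Mq_iff q _).mp (hMq ▸ hνg) _ hsupp2
  rw [Finsupp.add_apply] at hi
  have h1 := hνle i
  rw [hμapp i] at h1
  have h2 := hαlt i
  omega
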